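/- arXiv:1612.01095 — 3 statements merged into one kernel-verified Lean document; each statement's English description precedes it below -/
import Mathlib

section
/- Let V be a finite set and let E be a set of elementary triplets over V satisfying ci0 and ci1. Define M1 = { I⊥J|K : there exist enumerations I = {i_1,…,i_m} and J = {j_1,…,j_n} such that i_s⊥j_t | {i_1,…,i_{s−1}} ∪ {j_1,…,j_{t−1}} ∪ K ∈ E for all 1 ≤ s ≤ m and 1 ≤ t ≤ n }. Then m(E) = M1. -/
variable {V : Type*} [DecidableEq V]

/-- ci0: for all distinct `i j` and `L ⊆ V \ {i, j}`, `i ⊥ j | L ∈ E ↔ j ⊥ i | L ∈ E`. -/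
def ci0 (E : Set (V × V × Finset V)) : Prop :=
  ∀ (i j : V) (L : Finset V), i ≠ j → i ∉ L → j ∉ L →
    ((i, j, L) ∈ E ↔ (j, i, L) ∈ E)

/-- ci1: for all distinct `i j k` and `L ⊆ V \ {i, j, k}`,
`(i ⊥ j | {k} ∪ L ∈ E and i ⊥ k | L ∈ E) ↔ (i ⊥ k | {j} ∪ L ∈ E and i ⊥ j | L ∈ E)`. -/
def ci1 (E : Set (V × V × Finset V)) : Prop :=
  ∀ (i j k : V) (L : Finset V), i ≠ j → i ≠ k → j ≠ k → i ∉ L → j ∉ L → k ∉ L →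
    (((i, j, insert k L) ∈ E ∧ (i, k, L) ∈ E) ↔
      ((i, k, insert j L) ∈ E ∧ (i, j, L) ∈ E))

/-- `m(E)`: the triplets `I ⊥ J | K` (with `I`, `J`, `K` pairwise disjoint and `I`, `J`
nonempty) such that `i ⊥ j | M' ∈ E` for all `i ∈ I`, `j ∈ J` and all `M'` with
`K ⊆ M' ⊆ (I \ {i}) ∪ (J \ {j}) ∪ K`. -/
def mMap (E : Set (V × V × Finset V)) : Set (Finset V × Finset V × Finset V) :=
  { T | Disjoint T.1 T.2.1 ∧ Disjoint T.1 T.2.2 ∧ Disjoint T.2.1 T.2.2 ∧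
      T.1.Nonempty ∧ T.2.1.Nonempty ∧
      ∀ i ∈ T.1, ∀ j ∈ T.2.1, ∀ M' : Finset V, T.2.2 ⊆ M' →
        M' ⊆ T.1.erase i ∪ T.2.1.erase j ∪ T.2.2 → (i, j, M') ∈ E }

/-- `M1`: the triplets `I ⊥ J | K` for which there exist enumerations `I = {i₁, …, i_m}`
and `J = {j₁, …, j_n}` such that
`i_s ⊥ j_t | {i₁, …, i_{s-1}} ∪ {j₁, …, j_{t-1}} ∪ K ∈ E` for all `s`, `t`. -/
def M1 (E : Set (V × V × Finset V)) : Set (Finset V × Finset V × Finset V) :=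
  { T | Disjoint T.1 T.2.1 ∧ Disjoint T.1 T.2.2 ∧ Disjoint T.2.1 T.2.2 ∧
      T.1.Nonempty ∧ T.2.1.Nonempty ∧
      ∃ li lj : List V, li.Nodup ∧ lj.Nodup ∧ li.toFinset = T.1 ∧ lj.toFinset = T.2.1 ∧
        ∀ s : Fin li.length, ∀ t : Fin lj.length,
          (li.get s, lj.get t,
            (li.take s.val).toFinset ∪ (lj.take t.val).toFinset ∪ T.2.2) ∈ E }

lemma hflip {E : Set (V × V × Finset V)}
    (hE : ∀ T ∈ E, T.1 ≠ T.2.1 ∧ T.1 ∉ T.2.2 ∧ T.2.1 ∉ T.2.2) (h0 : ci0 E)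
    {i j : V} {L : Finset V} (h : (i, j, L) ∈ E) : (j, i, L) ∈ E := by
  obtain ⟨hij, hiL, hjL⟩ := hE _ h
  exact (h0 i j L hij hiL hjL).mp h

lemma hfwd {E : Set (V × V × Finset V)}
    (hE : ∀ T ∈ E, T.1 ≠ T.2.1 ∧ T.1 ∉ T.2.2 ∧ T.2.1 ∉ T.2.2) (h1 : ci1 E)
    {i j k : V} {L : Finset V} (ha : (i, j, insert k L) ∈ E) (hb : (i, k, L) ∈ E) :
    (i, j, L) ∈ E ∧ (i, k, insert j L) ∈ E := by
  obtain ⟨hij, hi, hj⟩ := hE _ ha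
  obtain ⟨hik, _, hk⟩ := hE _ hb
  simp only [Finset.mem_insert, not_or] at hi hj
  have := (h1 i j k L hij hik hj.1 hi.2 hj.2 hk).mp ⟨ha, hb⟩
  exact ⟨this.2, this.1⟩

lemma hbwd {E : Set (V × V × Finset V)}
    (hE : ∀ T ∈ E, T.1 ≠ T.2.1 ∧ T.1 ∉ T.2.2 ∧ T.2.1 ∉ T.2.2) (h1 : ci1 E)
    {i j k : V} {L : Finset V} (ha : (i, k, insert j L) ∈ E) (hb : (i, j, L) ∈ E) :
    (i, j, insert k L) ∈ E ∧ (i, k, L) ∈ E := by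
  obtain ⟨hik, hi, hk⟩ := hE _ ha
  obtain ⟨hij, _, hj⟩ := hE _ hb
  simp only [Finset.mem_insert, not_or] at hi hk
  exact (h1 i j k L hij hik (fun e => hk.1 e.symm) hi.2 hj hk.2).mpr ⟨ha, hb⟩

lemma lemA {E : Set (V × V × Finset V)}
    (hE : ∀ T ∈ E, T.1 ≠ T.2.1 ∧ T.1 ∉ T.2.2 ∧ T.2.1 ∉ T.2.2)
    (h0 : ci0 E) (h1 : ci1 E) (l : List V) :
    l.Nodup → ∀ (j : V) (K : Finset V),
      (∀ s : Fin l.length, (l.get s, j, (l.take s.val).toFinset ∪ K) ∈ E) →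
      ∀ i ∈ l.toFinset, ∀ A : Finset V, A ⊆ l.toFinset.erase i → (i, j, A ∪ K) ∈ E := by
  induction l using List.reverseRecOn with
  | nil => intro _ j K _ i hi; simp at hi
  | append_singleton l' a ih =>
    intro hnd j K hch i hi A hA
    obtain ⟨hnd', -, hdisj⟩ := List.nodup_append'.mp hnd
    have hal' : a ∉ l' := fun h => hdisj h (by simp)
    have chain' : ∀ s : Fin l'.length,
        (l'.get s, j, (l'.take s.val).toFinset ∪ K) ∈ E := by
      intro s
      have hs : s.val < (l' ++ [a]).length := by simp
      have := hch ⟨s.val, hs⟩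
      have e1 : (l' ++ [a]).get ⟨s.val, hs⟩ = l'.get s := by
        simp [List.getElem_append_left s.2]
      have e2 : (l' ++ [a]).take s.val = l'.take s.val := by
        rw [List.take_append]
        simp [Nat.sub_eq_zero_of_le (le_of_lt s.2)]
      rwa [e1, e2] at this
    have ha' : (a, j, l'.toFinset ∪ K) ∈ E := by
      have hs : l'.length < (l' ++ [a]).length := by simp
      have := hch ⟨l'.length, hs⟩
      have e1 : (l' ++ [a]).get ⟨l'.length, hs⟩ = a := by
        simp
      have e2 : (l' ++ [a]).take l'.length = l' := List.take_left
      rw [e1, e2] at this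
      simpa using this
    have claim1 : ∀ A : Finset V, A ⊆ l'.toFinset → (a, j, A ∪ K) ∈ E := by
      suffices h : ∀ n (A : Finset V), A ⊆ l'.toFinset →
          l'.toFinset.card ≤ A.card + n → (a, j, A ∪ K) ∈ E by
        intro A hs
        exact h l'.toFinset.card A hs (by omega)
      intro n
      induction n with
      | zero =>
        intro A hs hc
        have : A = l'.toFinset := Finset.eq_of_subset_of_card_le hs (by omega)
        subst this; exact ha'
      | succ n ihn =>
        intro A hs hc
        by_cases hAeq : l'.toFinset ⊆ A
        · have : A = l'.toFinset := Finset.Subset.antisymm hs hAeq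
          subst this; exact ha'
        · obtain ⟨k, hk, hkA⟩ := Finset.not_subset.mp hAeq
          have hstep : (a, j, insert k A ∪ K) ∈ E :=
            ihn (insert k A) (Finset.insert_subset hk hs)
              (by rw [Finset.card_insert_of_notMem hkA]; omega)
          have hkj : (k, j, A ∪ K) ∈ E := by
            refine ih hnd' j K chain' k hk A (fun x hx => Finset.mem_erase.mpr ?_)
            exact ⟨fun e => hkA (e ▸ hx), hs hx⟩
          have hstep' : (j, a, insert k (A ∪ K)) ∈ E := by
            rw [← Finset.insert_union]; exact hflip hE h0 hstep
          have hkj' : (j, k, A ∪ K) ∈ E := hflip hE h0 hkj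
          exact hflip hE h0 (hfwd hE h1 hstep' hkj').1
    have hfin : (l' ++ [a]).toFinset = insert a l'.toFinset := by
      rw [List.toFinset_append, Finset.union_comm]
      ext x; simp [or_comm]
    rw [hfin] at hi hA
    by_cases hia : i = a
    · subst hia
      rw [Finset.erase_insert (by simpa using hal')] at hA
      exact claim1 A hA
    · have hil' : i ∈ l'.toFinset := by
        rcases Finset.mem_insert.mp hi with h | h
        · exact absurd h hia
        · exact h
      by_cases haA : a ∈ A
      · set A₀ := A.erase a with hA₀def
        have hA₀ : A₀ ⊆ l'.toFinset.erase i := by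
          intro x hx
          obtain ⟨hxa, hxA⟩ := Finset.mem_erase.mp hx
          obtain ⟨hxi, hxm⟩ := Finset.mem_erase.mp (hA hxA)
          refine Finset.mem_erase.mpr ⟨hxi, ?_⟩
          rcases Finset.mem_insert.mp hxm with h | h
          · exact absurd h hxa
          · exact h
        have hins : insert i A₀ ⊆ l'.toFinset :=
          Finset.insert_subset hil' (hA₀.trans (Finset.erase_subset _ _))
        have hc1 : (j, a, insert i (A₀ ∪ K)) ∈ E := by
          rw [← Finset.insert_union]; exact hflip hE h0 (claim1 _ hins)
        have hc2 : (j, i, A₀ ∪ K) ∈ E :=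
          hflip hE h0 (ih hnd' j K chain' i hil' A₀ hA₀)
        have := (hbwd hE h1 hc1 hc2).1
        have hout : (i, j, insert a (A₀ ∪ K)) ∈ E := hflip hE h0 this
        rwa [← Finset.insert_union, hA₀def, Finset.insert_erase haA] at hout
      · refine ih hnd' j K chain' i hil' A (fun x hx => ?_)
        obtain ⟨hxi, hxm⟩ := Finset.mem_erase.mp (hA hx)
        refine Finset.mem_erase.mpr ⟨hxi, ?_⟩
        rcases Finset.mem_insert.mp hxm with h | h
        · exact absurd (h ▸ hx) haA
        · exact h

lemma get_not_mem_take {l : List V} (h : l.Nodup) (s : Fin l.length) :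
    l.get s ∉ (l.take s.val).toFinset := by
  simp only [List.mem_toFinset]
  intro hmem
  have h2 := List.take_append_drop s.val l
  rw [← h2] at h
  have hd := (List.nodup_append'.mp h).2.2 hmem
  have : l.get s ∈ l.drop s.val := by
    have h0 : (0:ℕ) < (l.drop s.val).length := by simp [s.2]
    have : l.get s = (l.drop s.val).get ⟨0, h0⟩ := by
      simp [List.getElem_drop']
    rw [this]; exact (l.drop s.val).get_mem ⟨0, h0⟩
  exact hd this

/-- If a set `E` of elementary triplets over a finite set `V` satisfies
ci0 and ci1 then `m(E) = M1`. -/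
theorem mMap_eq_M1 [Fintype V] (E : Set (V × V × Finset V))
    (hE : ∀ T ∈ E, T.1 ≠ T.2.1 ∧ T.1 ∉ T.2.2 ∧ T.2.1 ∉ T.2.2)
    (h0 : ci0 E) (h1 : ci1 E) :
    mMap E = M1 E := by
  ext T
  obtain ⟨I, J, K⟩ := T
  simp only [mMap, M1, Set.mem_setOf_eq]
  constructor
  · rintro ⟨d1, d2, d3, n1, n2, h⟩
    refine ⟨d1, d2, d3, n1, n2, I.toList, J.toList, I.nodup_toList, J.nodup_toList,
      I.toList_toFinset, J.toList_toFinset, ?_⟩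
    intro s t
    set i := I.toList.get s with hi_def
    set j := J.toList.get t with hj_def
    have hiI : i ∈ I := by
      rw [← I.toList_toFinset]
      exact List.mem_toFinset.mpr (I.toList.get_mem _)
    have hjJ : j ∈ J := by
      rw [← J.toList_toFinset]
      exact List.mem_toFinset.mpr (J.toList.get_mem _)
    refine h i hiI j hjJ _ Finset.subset_union_right (fun x hx => ?_)
    rcases Finset.mem_union.mp hx with hx | hx
    · rcases Finset.mem_union.mp hx with hx | hx
      · have hxI : x ∈ I := by
          rw [← I.toList_toFinset]
          exact List.mem_toFinset.mpr (List.take_subset _ _ (List.mem_toFinset.mp hx))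
        have hxi : x ≠ i := by
          intro e; subst e
          exact get_not_mem_take I.nodup_toList s hx
        exact Finset.mem_union.mpr (Or.inl (Finset.mem_union.mpr (Or.inl
          (Finset.mem_erase.mpr ⟨hxi, hxI⟩))))
      · have hxJ : x ∈ J := by
          rw [← J.toList_toFinset]
          exact List.mem_toFinset.mpr (List.take_subset _ _ (List.mem_toFinset.mp hx))
        have hxj : x ≠ j := by
          intro e; subst e
          exact get_not_mem_take J.nodup_toList t hx
        exact Finset.mem_union.mpr (Or.inl (Finset.mem_union.mpr (Or.inr
          (Finset.mem_erase.mpr ⟨hxj, hxJ⟩))))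
    · exact Finset.mem_union.mpr (Or.inr hx)
  · rintro ⟨d1, d2, d3, n1, n2, li, lj, hndi, hndj, hfi, hfj, hch⟩
    refine ⟨d1, d2, d3, n1, n2, ?_⟩
    have S1 : ∀ t : Fin lj.length, ∀ i ∈ I, ∀ A : Finset V, A ⊆ I.erase i →
        (i, lj.get t, A ∪ ((lj.take t.val).toFinset ∪ K)) ∈ E := by
      intro t i hi A hA
      have hchain : ∀ s : Fin li.length,
          (li.get s, lj.get t, (li.take s.val).toFinset ∪ ((lj.take t.val).toFinset ∪ K)) ∈ E := by
        intro s
        have := hch s t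
        rwa [Finset.union_assoc] at this
      have := lemA hE h0 h1 li hndi (lj.get t) ((lj.take t.val).toFinset ∪ K) hchain
      rw [hfi] at this
      exact this i hi A hA
    have S2 : ∀ i ∈ I, ∀ A : Finset V, A ⊆ I.erase i → ∀ j ∈ J, ∀ B : Finset V,
        B ⊆ J.erase j → (j, i, B ∪ (A ∪ K)) ∈ E := by
      intro i hi A hA
      have hchain : ∀ t : Fin lj.length,
          (lj.get t, i, (lj.take t.val).toFinset ∪ (A ∪ K)) ∈ E := by
        intro t
        have h' := hflip hE h0 (S1 t i hi A hA)
        rwa [← Finset.union_assoc, Finset.union_comm A, Finset.union_assoc] at h'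
      have := lemA hE h0 h1 lj hndj i (A ∪ K) hchain
      rw [hfj] at this
      exact this
    intro i hi j hj M' hKM hM
    set A := M' ∩ (I.erase i) with hAdef
    set B := M' ∩ (J.erase j) with hBdef
    have hM'eq : M' = A ∪ B ∪ K := by
      ext x
      constructor
      · intro hx
        rcases Finset.mem_union.mp (hM hx) with h' | h'
        · rcases Finset.mem_union.mp h' with h' | h'
          · exact Finset.mem_union.mpr (Or.inl (Finset.mem_union.mpr (Or.inl
              (Finset.mem_inter.mpr ⟨hx, h'⟩))))
          · exact Finset.mem_union.mpr (Or.inl (Finset.mem_union.mpr (Or.inr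
              (Finset.mem_inter.mpr ⟨hx, h'⟩))))
        · exact Finset.mem_union.mpr (Or.inr h')
      · intro hx
        rcases Finset.mem_union.mp hx with h' | h'
        · rcases Finset.mem_union.mp h' with h' | h'
          · exact (Finset.mem_inter.mp h').1
          · exact (Finset.mem_inter.mp h').1
        · exact hKM h'
    have := hflip hE h0
      (S2 i hi A Finset.inter_subset_right j hj B Finset.inter_subset_right)
    rwa [hM'eq, show A ∪ B ∪ K = B ∪ (A ∪ K) by
      rw [← Finset.union_assoc, Finset.union_comm A, Finset.union_assoc]]
end

section
/- Let V be a finite set and let E be a set of elementary triplets over V satisfying ci0, ci1 and ci2. Define M2 = { I⊥J|K : i⊥j | (I∖{i}) ∪ (J∖{j}) ∪ K ∈ E for all i ∈ I and j ∈ J }. Then m(E) = M2. -/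
variable {V : Type*} [DecidableEq V]

/-- ci2: for all distinct `i j k` and `L ⊆ V \ {i, j, k}`,
`(i ⊥ j | {k} ∪ L ∈ E and i ⊥ k | {j} ∪ L ∈ E) → (i ⊥ j | L ∈ E and i ⊥ k | L ∈ E)`. -/
def ci2 (E : Set (V × V × Finset V)) : Prop :=
  ∀ (i j k : V) (L : Finset V), i ≠ j → i ≠ k → j ≠ k → i ∉ L → j ∉ L → k ∉ L →
    ((i, j, insert k L) ∈ E ∧ (i, k, insert j L) ∈ E) →
      ((i, j, L) ∈ E ∧ (i, k, L) ∈ E)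

/-- `M2`: the triplets `I ⊥ J | K` such that
`i ⊥ j | (I \ {i}) ∪ (J \ {j}) ∪ K ∈ E` for all `i ∈ I` and `j ∈ J`. -/
def M2 (E : Set (V × V × Finset V)) : Set (Finset V × Finset V × Finset V) :=
  { T | Disjoint T.1 T.2.1 ∧ Disjoint T.1 T.2.2 ∧ Disjoint T.2.1 T.2.2 ∧
      T.1.Nonempty ∧ T.2.1.Nonempty ∧
      ∀ i ∈ T.1, ∀ j ∈ T.2.1,
        (i, j, T.1.erase i ∪ T.2.1.erase j ∪ T.2.2) ∈ E }

private lemma key_lemma {V : Type*} [DecidableEq V] [Fintype V]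
    (E : Set (V × V × Finset V)) (h0 : ci0 E) (h2 : ci2 E) (I J K : Finset V)
    (hIJ : Disjoint I J) (hIK : Disjoint I K) (hJK : Disjoint J K)
    (hM2 : ∀ i ∈ I, ∀ j ∈ J, (i, j, I.erase i ∪ J.erase j ∪ K) ∈ E) :
    ∀ n : ℕ, ∀ i ∈ I, ∀ j ∈ J, ∀ M' : Finset V, K ⊆ M' →
      M' ⊆ I.erase i ∪ J.erase j ∪ K → (Finset.univ \ M').card ≤ n →
      (i, j, M') ∈ E := by
  intro n
  induction n with
  | zero =>
    intro i hi j hj M' hKM hsub hcard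
    have hM : M' = I.erase i ∪ J.erase j ∪ K := by
      have h1 : Finset.univ \ M' = ∅ := Finset.card_eq_zero.mp (Nat.le_zero.mp hcard)
      have h2' : (Finset.univ : Finset V) ⊆ M' := by
        rwa [Finset.sdiff_eq_empty_iff_subset] at h1
      exact le_antisymm hsub (fun x _ => h2' (Finset.mem_univ x))
    rw [hM]; exact hM2 i hi j hj
  | succ n ih =>
    intro i hi j hj M' hKM hsub hcard
    have hij : i ≠ j := fun h => Finset.disjoint_left.mp hIJ hi (h ▸ hj)
    have hiM : i ∉ M' := by
      intro h
      rcases Finset.mem_union.mp (hsub h) with h' | h'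
      · rcases Finset.mem_union.mp h' with h'' | h''
        · exact (Finset.mem_erase.mp h'').1 rfl
        · exact Finset.disjoint_left.mp hIJ hi (Finset.mem_erase.mp h'').2
      · exact Finset.disjoint_left.mp hIK hi h'
    have hjM : j ∉ M' := by
      intro h
      rcases Finset.mem_union.mp (hsub h) with h' | h'
      · rcases Finset.mem_union.mp h' with h'' | h''
        · exact Finset.disjoint_left.mp hIJ (Finset.mem_erase.mp h'').2 hj
        · exact (Finset.mem_erase.mp h'').1 rfl
      · exact Finset.disjoint_left.mp hJK hj h'
    by_cases hfull : I.erase i ∪ J.erase j ∪ K ⊆ M'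
    · have hM : M' = I.erase i ∪ J.erase j ∪ K := le_antisymm hsub hfull
      rw [hM]; exact hM2 i hi j hj
    · obtain ⟨k, hkfull, hkM⟩ := Finset.not_subset.mp hfull
      have hkK : k ∉ K := fun h => hkM (hKM h)
      have hcard' : ∀ x : V, x ∉ M' → (Finset.univ \ insert x M').card ≤ n := by
        intro x hx
        have hmem : x ∈ Finset.univ \ M' := Finset.mem_sdiff.mpr ⟨Finset.mem_univ x, hx⟩
        have h1 : Finset.univ \ insert x M' = (Finset.univ \ M').erase x := by
          ext y; simp [Finset.mem_sdiff, Finset.mem_erase, Finset.mem_insert, and_comm]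
        rw [h1, Finset.card_erase_of_mem hmem]
        omega
      rcases Finset.mem_union.mp hkfull with h' | hkK'
      · rcases Finset.mem_union.mp h' with hkI | hkJ
        · -- k ∈ I.erase i
          have hki : k ≠ i := (Finset.mem_erase.mp hkI).1
          have hkI' : k ∈ I := (Finset.mem_erase.mp hkI).2
          have hkj : k ≠ j := fun h => Finset.disjoint_left.mp hIJ hkI' (h ▸ hj)
          -- (i, j, insert k M') ∈ E via ih
          have h₁ : (i, j, insert k M') ∈ E := by
            apply ih i hi j hj (insert k M') (hKM.trans (Finset.subset_insert k M'))
            · exact Finset.insert_subset hkfull hsub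
            · exact hcard' k hkM
          -- (k, j, insert i M') ∈ E via ih
          have h₂ : (k, j, insert i M') ∈ E := by
            apply ih k hkI' j hj (insert i M') (hKM.trans (Finset.subset_insert i M'))
            · intro x hx
              rcases Finset.mem_insert.mp hx with rfl | hx'
              · exact Finset.mem_union.mpr (Or.inl (Finset.mem_union.mpr (Or.inl
                  (Finset.mem_erase.mpr ⟨fun h => hki h.symm, hi⟩))))
              · rcases Finset.mem_union.mp (hsub hx') with h'' | h''
                · rcases Finset.mem_union.mp h'' with h3 | h3
                  · exact Finset.mem_union.mpr (Or.inl (Finset.mem_union.mpr (Or.inl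
                      (Finset.mem_erase.mpr ⟨fun h => hkM (h ▸ hx'), (Finset.mem_erase.mp h3).2⟩))))
                  · exact Finset.mem_union.mpr (Or.inl (Finset.mem_union.mpr (Or.inr h3)))
                · exact Finset.mem_union.mpr (Or.inr h'')
            · exact hcard' i hiM
          -- transfer with ci0
          have h₁' : (j, i, insert k M') ∈ E := by
            rw [← h0 i j (insert k M') hij
              (Finset.mem_insert.not.mpr (by push_neg; exact ⟨fun h => hki h.symm, hiM⟩))
              (Finset.mem_insert.not.mpr (by push_neg; exact ⟨fun h => hkj h.symm, hjM⟩))]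
            exact h₁
          have h₂' : (j, k, insert i M') ∈ E := by
            rw [← h0 k j (insert i M') hkj
              (Finset.mem_insert.not.mpr (by push_neg; exact ⟨hki, hkM⟩))
              (Finset.mem_insert.not.mpr (by push_neg; exact ⟨Ne.symm hij, hjM⟩))]
            exact h₂
          have := h2 j i k M' (Ne.symm hij) hkj.symm hki.symm hjM hiM hkM ⟨h₁', h₂'⟩
          rw [h0 i j M' hij hiM hjM]
          exact this.1
        · -- k ∈ J.erase j
          have hkj : k ≠ j := (Finset.mem_erase.mp hkJ).1
          have hkJ' : k ∈ J := (Finset.mem_erase.mp hkJ).2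
          have hki : k ≠ i := fun h => Finset.disjoint_left.mp hIJ (h ▸ hi) hkJ'
          have h₁ : (i, j, insert k M') ∈ E := by
            apply ih i hi j hj (insert k M') (hKM.trans (Finset.subset_insert k M'))
            · exact Finset.insert_subset hkfull hsub
            · exact hcard' k hkM
          have h₂ : (i, k, insert j M') ∈ E := by
            apply ih i hi k hkJ' (insert j M') (hKM.trans (Finset.subset_insert j M'))
            · intro x hx
              rcases Finset.mem_insert.mp hx with rfl | hx'
              · exact Finset.mem_union.mpr (Or.inl (Finset.mem_union.mpr (Or.inr
                  (Finset.mem_erase.mpr ⟨fun h => hkj h.symm, hj⟩))))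
              · rcases Finset.mem_union.mp (hsub hx') with h'' | h''
                · rcases Finset.mem_union.mp h'' with h3 | h3
                  · exact Finset.mem_union.mpr (Or.inl (Finset.mem_union.mpr (Or.inl h3)))
                  · exact Finset.mem_union.mpr (Or.inl (Finset.mem_union.mpr (Or.inr
                      (Finset.mem_erase.mpr ⟨fun h => hkM (h ▸ hx'), (Finset.mem_erase.mp h3).2⟩))))
                · exact Finset.mem_union.mpr (Or.inr h'')
            · exact hcard' j hjM
          exact (h2 i j k M' hij hki.symm hkj.symm hiM hjM hkM ⟨h₁, h₂⟩).1
      · exact absurd hkK' hkK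

/-- If a set `E` of elementary triplets over a finite set `V` satisfies
ci0, ci1 and ci2 then `m(E) = M2`. -/
theorem mMap_eq_M2 [Fintype V] (E : Set (V × V × Finset V))
    (hE : ∀ T ∈ E, T.1 ≠ T.2.1 ∧ T.1 ∉ T.2.2 ∧ T.2.1 ∉ T.2.2)
    (h0 : ci0 E) (h1 : ci1 E) (h2 : ci2 E) :
    mMap E = M2 E := by
  ext ⟨I, J, K⟩
  constructor
  · rintro ⟨d1, d2, d3, n1, n2, h⟩
    refine ⟨d1, d2, d3, n1, n2, fun i hi j hj => ?_⟩
    refine h i hi j hj _ ?_ (le_refl _)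
    exact Finset.subset_union_right
  · rintro ⟨d1, d2, d3, n1, n2, h⟩
    refine ⟨d1, d2, d3, n1, n2, fun i hi j hj M' hKM hsub => ?_⟩
    exact key_lemma E h0 h2 I J K d1 d2 d3 h (Finset.univ \ M').card i hi j hj M' hKM hsub
      (le_refl _)
end

section
/- Let V be a finite set and let E be a set of elementary triplets over V satisfying ci0, ci1 and ci3. Define M3 = { I⊥J|K : i⊥j|K ∈ E for all i ∈ I and j ∈ J }. Then m(E) = M3. -/
variable {V : Type*} [DecidableEq V]

/-- ci3: for all distinct `i j k` and `L ⊆ V \ {i, j, k}`,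
`(i ⊥ j | L ∈ E and i ⊥ k | L ∈ E) → (i ⊥ j | {k} ∪ L ∈ E and i ⊥ k | {j} ∪ L ∈ E)`. -/
def ci3 (E : Set (V × V × Finset V)) : Prop :=
  ∀ (i j k : V) (L : Finset V), i ≠ j → i ≠ k → j ≠ k → i ∉ L → j ∉ L → k ∉ L →
    ((i, j, L) ∈ E ∧ (i, k, L) ∈ E) →
      ((i, j, insert k L) ∈ E ∧ (i, k, insert j L) ∈ E)

/-- `M3`: the triplets `I ⊥ J | K` such that `i ⊥ j | K ∈ E` for all `i ∈ I`, `j ∈ J`. -/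
def M3 (E : Set (V × V × Finset V)) : Set (Finset V × Finset V × Finset V) :=
  { T | Disjoint T.1 T.2.1 ∧ Disjoint T.1 T.2.2 ∧ Disjoint T.2.1 T.2.2 ∧
      T.1.Nonempty ∧ T.2.1.Nonempty ∧
      ∀ i ∈ T.1, ∀ j ∈ T.2.1, (i, j, T.2.2) ∈ E }

/-- If a set `E` of elementary triplets over a finite set `V` satisfies
ci0, ci1 and ci3 then `m(E) = M3`. -/
theorem mMap_eq_M3 [Fintype V] (E : Set (V × V × Finset V))
    (hE : ∀ T ∈ E, T.1 ≠ T.2.1 ∧ T.1 ∉ T.2.2 ∧ T.2.1 ∉ T.2.2)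
    (h0 : ci0 E) (h1 : ci1 E) (h3 : ci3 E) :
    mMap E = M3 E := by
  ext ⟨I, J, K⟩
  simp only [mMap, M3, Set.mem_setOf_eq]
  constructor
  · rintro ⟨d1, d2, d3, n1, n2, h⟩
    exact ⟨d1, d2, d3, n1, n2, fun i hi j hj => h i hi j hj K (subset_refl _)
      (Finset.subset_union_right)⟩
  · rintro ⟨d1, d2, d3, n1, n2, h⟩
    refine ⟨d1, d2, d3, n1, n2, ?_⟩
    have key : ∀ n (M' : Finset V), (M' \ K).card = n → K ⊆ M' →
        ∀ i ∈ I, ∀ j ∈ J, M' ⊆ I.erase i ∪ J.erase j ∪ K → (i, j, M') ∈ E := by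
      intro n
      induction n with
      | zero =>
        intro M' hcard hK i hi j hj _
        have : M' = K := Finset.Subset.antisymm
          (fun x hx => by
            by_contra hxK
            exact absurd (Finset.card_eq_zero.mp hcard ▸ Finset.mem_sdiff.mpr ⟨hx, hxK⟩)
              (Finset.notMem_empty x)) hK
        exact this ▸ h i hi j hj
      | succ n ih =>
        intro M' hcard hK i hi j hj hsub
        obtain ⟨k, hk⟩ : (M' \ K).Nonempty := Finset.card_pos.mp (hcard ▸ Nat.succ_pos n)
        obtain ⟨hkM, hkK⟩ := Finset.mem_sdiff.mp hk
        set L := M'.erase k with hL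
        have hkL : k ∉ L := Finset.notMem_erase k M'
        have hML : M' = insert k L := (Finset.insert_erase hkM).symm
        have hKL : K ⊆ L := fun x hx => Finset.mem_erase.mpr
          ⟨fun h => hkK (h ▸ hx), hK hx⟩
        have hcardL : (L \ K).card = n := by
          have : L \ K = (M' \ K).erase k := by
            ext x
            simp only [hL, Finset.mem_sdiff, Finset.mem_erase]
            tauto
          rw [this, Finset.card_erase_of_mem hk, hcard]; rfl
        -- basic disjointness facts
        have hij : i ≠ j := fun e => Finset.disjoint_left.mp d1 hi (e ▸ hj)
        have hiM : i ∉ M' := by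
          intro hiM
          rcases Finset.mem_union.mp (hsub hiM) with hx | hx
          · rcases Finset.mem_union.mp hx with hx | hx
            · exact (Finset.mem_erase.mp hx).1 rfl
            · exact Finset.disjoint_left.mp d1 hi (Finset.mem_erase.mp hx).2
          · exact Finset.disjoint_left.mp d2 hi hx
        have hjM : j ∉ M' := by
          intro hjM
          rcases Finset.mem_union.mp (hsub hjM) with hx | hx
          · rcases Finset.mem_union.mp hx with hx | hx
            · exact Finset.disjoint_left.mp d1 (Finset.mem_erase.mp hx).2 hj
            · exact (Finset.mem_erase.mp hx).1 rfl
          · exact Finset.disjoint_left.mp d3 hj hx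
        have hiL : i ∉ L := fun hx => hiM (Finset.mem_of_mem_erase hx)
        have hjL : j ∉ L := fun hx => hjM (Finset.mem_of_mem_erase hx)
        have hLsub : L ⊆ I.erase i ∪ J.erase j ∪ K :=
          fun x hx => hsub (Finset.mem_of_mem_erase hx)
        have hijL : (i, j, L) ∈ E := ih L hcardL hKL i hi j hj hLsub
        rcases Finset.mem_union.mp (hsub hkM) with hx | hx
        swap
        · exact absurd hx hkK
        rcases Finset.mem_union.mp hx with hx | hx
        · -- k ∈ I.erase i
          obtain ⟨hki, hkI⟩ := Finset.mem_erase.mp hx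
          have hkj : k ≠ j := fun e => Finset.disjoint_left.mp d1 hkI (e ▸ hj)
          have hkjL : (k, j, L) ∈ E := by
            refine ih L hcardL hKL k hkI j hj (fun x hx' => ?_)
            rcases Finset.mem_union.mp (hLsub hx') with hy | hy
            · rcases Finset.mem_union.mp hy with hy | hy
              · exact Finset.mem_union.mpr (Or.inl (Finset.mem_union.mpr (Or.inl
                  (Finset.mem_erase.mpr ⟨fun e => hkL (e ▸ hx'),
                    (Finset.mem_erase.mp hy).2⟩))))
              · exact Finset.mem_union.mpr (Or.inl (Finset.mem_union.mpr (Or.inr hy)))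
            · exact Finset.mem_union.mpr (Or.inr hy)
          have hjiL : (j, i, L) ∈ E := (h0 i j L hij hiL hjL).mp hijL
          have hjkL : (j, k, L) ∈ E := (h0 k j L hkj hkL hjL).mp hkjL
          have := (h3 j i k L (Ne.symm hij) (Ne.symm hkj)
            (fun e => hki e.symm) hjL hiL hkL ⟨hjiL, hjkL⟩).1
          have : (j, i, M') ∈ E := hML ▸ this
          exact (h0 j i M' (Ne.symm hij) hjM hiM).mp this
        · -- k ∈ J.erase j
          obtain ⟨hkj, hkJ⟩ := Finset.mem_erase.mp hx
          have hik : i ≠ k := fun e => Finset.disjoint_left.mp d1 hi (e ▸ hkJ)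
          have hikL : (i, k, L) ∈ E := by
            refine ih L hcardL hKL i hi k hkJ (fun x hx' => ?_)
            rcases Finset.mem_union.mp (hLsub hx') with hy | hy
            · rcases Finset.mem_union.mp hy with hy | hy
              · exact Finset.mem_union.mpr (Or.inl (Finset.mem_union.mpr (Or.inl hy)))
              · exact Finset.mem_union.mpr (Or.inl (Finset.mem_union.mpr (Or.inr
                  (Finset.mem_erase.mpr ⟨fun e => hkL (e ▸ hx'),
                    (Finset.mem_erase.mp hy).2⟩))))
            · exact Finset.mem_union.mpr (Or.inr hy)
          have := (h3 i j k L hij hik (Ne.symm hkj) hiL hjL hkL ⟨hijL, hikL⟩).1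
          exact hML ▸ this
    intro i hi j hj M' hKM hsub
    exact key (M' \ K).card M' rfl hKM i hi j hj hsub
end
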